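/- If Q ∈ S^d_{>0} with λ(Q) = 1 and Q^{-1} does not lie in the Voronoi domain V(Q) = cone{xxᵀ : x ∈ Min Q}, then Q is not a local minimum of det on the Ryshkov polyhedron R = {Q' ∈ S^d_{>0} : λ(Q') ≥ 1}: in every neighborhood of Q there is Q' ∈ R with det Q' < det Q. -/

import Mathlib

open Matrix
open Finset

variable {ι : Type*} {E : Type*} [AddCommGroup E] [Module ℝ E]

lemma cone_cara (g : ι → E) :
    ∀ (s : Finset ι) (α : ι → ℝ), (∀ x ∈ s, 0 ≤ α x) →
    ∃ t ⊆ s, (LinearIndependent ℝ (fun x : t => g x)) ∧ ∃ β : ι → ℝ,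
      (∀ x, 0 ≤ β x) ∧ ∑ x ∈ s, α x • g x = ∑ x ∈ t, β x • g x := by
  classical
  intro s
  induction s using Finset.strongInductionOn with
  | _ s ih =>
  intro α hα
  by_cases hli : LinearIndependent ℝ (fun x : s => g x)
  · refine ⟨s, le_refl _, hli, fun x => if h : x ∈ s then α x else 0, ?_, ?_⟩
    · intro x; by_cases h : x ∈ s <;> simp [h]; exact hα x h
    · apply Finset.sum_congr rfl; intro x hx; simp [hx]
  · obtain ⟨c, hc0, i0, hi0⟩ := Fintype.not_linearIndependent_iff.1 hli
    -- extend c to ι, make some coefficient positive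
    set cc : ι → ℝ := fun x => if h : x ∈ s then c ⟨x, h⟩ else 0 with hcc
    have hccsum : ∑ x ∈ s, cc x • g x = 0 := by
      rw [← hc0, ← Finset.sum_coe_sort s (fun x => cc x • g x)]
      apply Finset.sum_congr rfl; intro x _; simp [hcc]
    have hccne : cc (i0 : ι) ≠ 0 := by simp [hcc, i0.2]; exact hi0
    -- WLOG positive coefficient exists
    obtain ⟨c', hc'sum, hx1, hx1s, hc'pos⟩ :
        ∃ c' : ι → ℝ, ∑ x ∈ s, c' x • g x = 0 ∧ ∃ x1, x1 ∈ s ∧ 0 < c' x1 := by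
      rcases lt_or_gt_of_ne hccne with h | h
      · exact ⟨-cc, by simp [hccsum], i0, i0.2, by simpa using h⟩
      · exact ⟨cc, hccsum, i0, i0.2, h⟩
    set P := s.filter (fun x => 0 < c' x) with hP
    have hPne : P.Nonempty := ⟨hx1, by simp [hP, hx1s, hc'pos]⟩
    obtain ⟨x0, hx0P, hx0r⟩ := Finset.exists_mem_eq_inf' hPne (fun x => α x / c' x)
    set r := P.inf' hPne (fun x => α x / c' x) with hr
    have hx0s : x0 ∈ s := (Finset.mem_filter.1 hx0P).1
    have hx0pos : 0 < c' x0 := (Finset.mem_filter.1 hx0P).2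
    have hrnn : 0 ≤ r := by
      apply Finset.le_inf'
      intro b hb
      exact div_nonneg (hα b (Finset.mem_filter.1 hb).1) (le_of_lt (Finset.mem_filter.1 hb).2)
    set α' : ι → ℝ := fun x => α x - r * c' x with hα'
    have hα'nn : ∀ x ∈ s, 0 ≤ α' x := by
      intro x hx
      rcases le_or_gt (c' x) 0 with h | h
      · have : r * c' x ≤ 0 := mul_nonpos_of_nonneg_of_nonpos hrnn h
        simp only [hα']; linarith [hα x hx]
      · have hxP : x ∈ P := Finset.mem_filter.2 ⟨hx, h⟩
        have := Finset.inf'_le (fun x => α x / c' x) hxP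
        rw [← hr] at this
        have : r * c' x ≤ α x := by
          rw [div_eq_mul_inv] at this
          calc r * c' x ≤ (α x * (c' x)⁻¹) * c' x := by
                apply mul_le_mul_of_nonneg_right this (le_of_lt h)
          _ = α x := by field_simp
        simp only [hα']; linarith
    have hα'x0 : α' x0 = 0 := by
      simp only [hα', hx0r]; field_simp; ring
    have hsum' : ∑ x ∈ s, α x • g x = ∑ x ∈ s, α' x • g x := by
      simp only [hα', sub_smul, Finset.sum_sub_distrib, mul_smul]
      rw [← Finset.smul_sum, hc'sum, smul_zero, sub_zero]
    have hsum'' : ∑ x ∈ s, α' x • g x = ∑ x ∈ s.erase x0, α' x • g x := by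
      rw [← Finset.add_sum_erase _ _ hx0s, hα'x0, zero_smul, zero_add]
    obtain ⟨t, hts, hli', β, hβ, hβsum⟩ :=
      ih (s.erase x0) (Finset.erase_ssubset hx0s) α' (fun x hx => hα'nn x (Finset.mem_erase.1 hx).2)
    exact ⟨t, le_trans hts (Finset.erase_subset _ _), hli', β, hβ,
      by rw [hsum', hsum'', hβsum]⟩

lemma cone_t_closed {H : Type*} [NormedAddCommGroup H] [NormedSpace ℝ H]
    [FiniteDimensional ℝ H] (g : ι → H) (t : Finset ι)
    (hli : LinearIndependent ℝ (fun x : t => g x)) :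
    IsClosed {w : H | ∃ β : ι → ℝ, (∀ x, 0 ≤ β x) ∧ w = ∑ x ∈ t, β x • g x} := by
  classical
  set L : (t → ℝ) →ₗ[ℝ] H := Fintype.linearCombination ℝ (fun x : t => g x) with hL
  have hinj : LinearMap.ker L = ⊥ := by
    rw [LinearMap.ker_eq_bot']
    intro m hm
    have := Fintype.linearIndependent_iff.1 hli m
      (by rwa [hL, Fintype.linearCombination_apply] at hm)
    funext i; exact this i
  have hset : {w : H | ∃ β : ι → ℝ, (∀ x, 0 ≤ β x) ∧ w = ∑ x ∈ t, β x • g x}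
      = L '' {β : t → ℝ | ∀ x, 0 ≤ β x} := by
    ext w
    constructor
    · rintro ⟨β, hβ, rfl⟩
      refine ⟨fun x => β x, fun x => hβ x, ?_⟩
      rw [hL, Fintype.linearCombination_apply, Finset.sum_coe_sort t (fun x => β x • g x)]
    · rintro ⟨β, hβ, rfl⟩
      refine ⟨fun x => if h : x ∈ t then β ⟨x, h⟩ else 0, ?_, ?_⟩
      · intro x; by_cases h : x ∈ t <;> simp [h]; exact hβ _
      · rw [hL, Fintype.linearCombination_apply,
          ← Finset.sum_coe_sort t (fun x => (if h : x ∈ t then β ⟨x, h⟩ else 0) • g x)]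
        apply Finset.sum_congr rfl; intro x _; simp [x.2]
  rw [hset]
  have horth : IsClosed {β : t → ℝ | ∀ x, 0 ≤ β x} := by
    have : {β : t → ℝ | ∀ x, 0 ≤ β x} = ⋂ x, {β : t → ℝ | 0 ≤ β x} := by
      ext; simp [Set.mem_iInter]
    rw [this]
    exact isClosed_iInter fun x => isClosed_le continuous_const (continuous_apply x)
  exact (LinearMap.isClosedEmbedding_of_injective hinj).isClosedMap _ horth

lemma cone_isClosed {H : Type*} [NormedAddCommGroup H] [NormedSpace ℝ H]
    [FiniteDimensional ℝ H] (g : ι → H) (s : Finset ι) :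
    IsClosed {w : H | ∃ α : ι → ℝ, (∀ x, 0 ≤ α x) ∧ w = ∑ x ∈ s, α x • g x} := by
  classical
  have hset : {w : H | ∃ α : ι → ℝ, (∀ x, 0 ≤ α x) ∧ w = ∑ x ∈ s, α x • g x}
      = ⋃ t ∈ {t : Finset ι | t ⊆ s ∧ LinearIndependent ℝ (fun x : t => g x)},
          {w : H | ∃ β : ι → ℝ, (∀ x, 0 ≤ β x) ∧ w = ∑ x ∈ t, β x • g x} := by
    ext w
    simp only [Set.mem_iUnion, Set.mem_setOf_eq]
    constructor
    · rintro ⟨α, hα, rfl⟩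
      obtain ⟨t, hts, hli, β, hβ, hsum⟩ := cone_cara g s α (fun x _ => hα x)
      exact ⟨t, ⟨hts, hli⟩, β, hβ, hsum⟩
    · rintro ⟨t, ⟨hts, _⟩, β, hβ, rfl⟩
      refine ⟨fun x => if x ∈ t then β x else 0, ?_, ?_⟩
      · intro x; by_cases h : x ∈ t <;> simp [h]; exact hβ _
      · rw [← Finset.sum_subset hts (fun x _ hx => by simp [hx])]
        apply Finset.sum_congr rfl; intro x hx; simp [hx]
  rw [hset]
  apply Set.Finite.isClosed_biUnion
  · exact Set.Finite.subset (Finset.finite_toSet s.powerset)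
      (fun t ht => Finset.mem_coe.2 (Finset.mem_powerset.2 ht.1))
  · rintro t ⟨_, hli⟩
    exact cone_t_closed g t hli
open Matrix

/-- The quadratic form value `xᵀ Q x`. -/
noncomputable def qf {d : ℕ} (Q : Matrix (Fin d) (Fin d) ℝ) (x : Fin d → ℝ) : ℝ :=
  x ⬝ᵥ Q.mulVec x

/-- Coordinatewise cast of an integer vector to a real vector. -/
noncomputable def intCast {d : ℕ} (x : Fin d → ℤ) : Fin d → ℝ := fun i => (x i : ℝ)

/-- The arithmetical minimum `λ(Q) = inf_{x ∈ ℤ^d \ {0}} xᵀQx`. -/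
noncomputable def arithMin {d : ℕ} (Q : Matrix (Fin d) (Fin d) ℝ) : ℝ :=
  sInf {r : ℝ | ∃ x : Fin d → ℤ, x ≠ 0 ∧ r = qf Q (intCast x)}

/-- The set of minimal vectors `Min Q`. -/
def minVecs {d : ℕ} (Q : Matrix (Fin d) (Fin d) ℝ) : Set (Fin d → ℤ) :=
  {x | x ≠ 0 ∧ qf Q (intCast x) = arithMin Q}

lemma qf_add {d : ℕ} (A B : Matrix (Fin d) (Fin d) ℝ) (v : Fin d → ℝ) :
    qf (A + B) v = qf A v + qf B v := by
  simp [qf, Matrix.add_mulVec, dotProduct_add]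

lemma qf_smul {d : ℕ} (c : ℝ) (A : Matrix (Fin d) (Fin d) ℝ) (v : Fin d → ℝ) :
    qf (c • A) v = c * qf A v := by
  simp [qf, Matrix.smul_mulVec, dotProduct_smul]

lemma qf_smul_vec {d : ℕ} (A : Matrix (Fin d) (Fin d) ℝ) (c : ℝ) (v : Fin d → ℝ) :
    qf A (c • v) = c ^ 2 * qf A v := by
  simp [qf, Matrix.mulVec_smul, dotProduct_smul, smul_dotProduct, smul_smul]
  ring

lemma qf_transpose {d : ℕ} (A : Matrix (Fin d) (Fin d) ℝ) (v : Fin d → ℝ) :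
    qf Aᵀ v = qf A v := by
  rw [qf, Matrix.mulVec_transpose, dotProduct_comm, ← Matrix.dotProduct_mulVec, qf]

lemma qf_sum_sum {d : ℕ} (A : Matrix (Fin d) (Fin d) ℝ) (v : Fin d → ℝ) :
    qf A v = ∑ i, ∑ j, v i * A i j * v j := by
  simp [qf, dotProduct, Matrix.mulVec, Finset.mul_sum, mul_assoc]

lemma qf_continuous {d : ℕ} (A : Matrix (Fin d) (Fin d) ℝ) : Continuous (qf A) := by
  have : qf A = fun v => ∑ i, ∑ j, v i * A i j * v j := by
    funext v; exact qf_sum_sum A v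
  rw [this]
  apply continuous_finset_sum; intro i _
  apply continuous_finset_sum; intro j _
  exact ((continuous_apply i).mul continuous_const).mul (continuous_apply j)

lemma qf_lower {d : ℕ} (hd : 0 < d) {Q : Matrix (Fin d) (Fin d) ℝ} (hQ : Q.PosDef) :
    ∃ c > 0, ∀ v : Fin d → ℝ, c * ‖v‖ ^ 2 ≤ qf Q v := by
  have : Nonempty (Fin d) := Fin.pos_iff_nonempty.1 hd
  have hS : IsCompact (Metric.sphere (0 : Fin d → ℝ) 1) := isCompact_sphere 0 1
  have hSne : (Metric.sphere (0 : Fin d → ℝ) 1).Nonempty := by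
    refine ⟨fun _ => 1, ?_⟩
    rw [mem_sphere_zero_iff_norm]
    exact pi_norm_const (1:ℝ) |>.trans (by simp)
  obtain ⟨v0, hv0, hmin⟩ := hS.exists_isMinOn hSne (qf_continuous Q).continuousOn
  have hv0n : ‖v0‖ = 1 := by simpa using hv0
  have hv0ne : v0 ≠ 0 := by intro h; rw [h] at hv0n; simp at hv0n
  have hc : 0 < qf Q v0 := by
    have := hQ.dotProduct_mulVec_pos hv0ne
    simpa [qf, star_trivial] using this
  refine ⟨qf Q v0, hc, fun v => ?_⟩
  rcases eq_or_ne v 0 with rfl | hv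
  · simp [qf]
  · have hvn : 0 < ‖v‖ := norm_pos_iff.2 hv
    have hu : (‖v‖⁻¹ • v) ∈ Metric.sphere (0 : Fin d → ℝ) 1 := by
      simp [norm_smul, abs_of_pos (inv_pos.2 hvn), inv_mul_cancel₀ (ne_of_gt hvn)]
    have := hmin hu
    simp only [Set.mem_setOf_eq] at this
    have hqv : qf Q (‖v‖⁻¹ • v) = ‖v‖⁻¹ ^ 2 * qf Q v := qf_smul_vec Q _ v
    rw [hqv] at this
    have h2 : qf Q v0 * ‖v‖ ^ 2 ≤ (‖v‖⁻¹ ^ 2 * qf Q v) * ‖v‖ ^ 2 := by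
      apply mul_le_mul_of_nonneg_right this (by positivity)
    calc qf Q v0 * ‖v‖ ^ 2 ≤ (‖v‖⁻¹ ^ 2 * qf Q v) * ‖v‖ ^ 2 := h2
    _ = qf Q v := by field_simp

lemma qf_upper {d : ℕ} (A : Matrix (Fin d) (Fin d) ℝ) :
    ∃ C > 0, ∀ v : Fin d → ℝ, |qf A v| ≤ C * ‖v‖ ^ 2 := by
  refine ⟨(∑ i, ∑ j, |A i j|) + 1, by positivity, fun v => ?_⟩
  rw [qf_sum_sum]
  calc |∑ i, ∑ j, v i * A i j * v j| ≤ ∑ i, ∑ j, |v i * A i j * v j| := by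
        apply (Finset.abs_sum_le_sum_abs _ _).trans
        apply Finset.sum_le_sum; intro i _
        exact Finset.abs_sum_le_sum_abs _ _
  _ ≤ ∑ i, ∑ j, ‖v‖ * |A i j| * ‖v‖ := by
        apply Finset.sum_le_sum; intro i _
        apply Finset.sum_le_sum; intro j _
        rw [abs_mul, abs_mul]
        have h1 : |v i| ≤ ‖v‖ := by
          simpa [Real.norm_eq_abs] using norm_le_pi_norm v i
        have h2 : |v j| ≤ ‖v‖ := by
          simpa [Real.norm_eq_abs] using norm_le_pi_norm v j
        have := abs_nonneg (A i j)
        apply mul_le_mul (mul_le_mul h1 le_rfl this (norm_nonneg v)) h2 (abs_nonneg _)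
        positivity
  _ ≤ ((∑ i, ∑ j, |A i j|) + 1) * ‖v‖ ^ 2 := by
        have : ∑ i, ∑ j, ‖v‖ * |A i j| * ‖v‖ = (∑ i, ∑ j, |A i j|) * ‖v‖ ^ 2 := by
          simp [Finset.sum_mul, Finset.mul_sum]; ring_nf
        rw [this]
        have : (0:ℝ) ≤ ‖v‖ ^ 2 := by positivity
        nlinarith

open scoped InnerProductSpace in
lemma cone_separation {ι : Type*} {n : Type*} [Fintype n]
    (g : ι → EuclideanSpace ℝ n) (s : Finset ι) (b : EuclideanSpace ℝ n)
    (hb : ¬ ∃ α : ι → ℝ, (∀ x, 0 ≤ α x) ∧ b = ∑ x ∈ s, α x • g x) :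
    ∃ y : EuclideanSpace ℝ n, (∀ x ∈ s, 0 ≤ ⟪g x, y⟫_ℝ) ∧ ⟪y, b⟫_ℝ < 0 := by
  classical
  set C : Set (EuclideanSpace ℝ n) :=
    {w | ∃ α : ι → ℝ, (∀ x, 0 ≤ α x) ∧ w = ∑ x ∈ s, α x • g x} with hC
  have hsmul : ∀ ⦃c : ℝ⦄, 0 < c → ∀ ⦃w⦄, w ∈ C → c • w ∈ C := by
    rintro c hc w ⟨α, hα, rfl⟩
    exact ⟨fun x => c * α x, fun x => mul_nonneg hc.le (hα x),
      by rw [Finset.smul_sum]; apply Finset.sum_congr rfl; intro x _; rw [smul_smul]⟩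
  have hadd : ∀ ⦃w⦄, w ∈ C → ∀ ⦃w'⦄, w' ∈ C → w + w' ∈ C := by
    rintro w ⟨α, hα, rfl⟩ w' ⟨α', hα', rfl⟩
    exact ⟨fun x => α x + α' x, fun x => add_nonneg (hα x) (hα' x),
      by rw [← Finset.sum_add_distrib]; apply Finset.sum_congr rfl; intro x _;
         rw [add_smul]⟩
  set K : ProperCone ℝ (EuclideanSpace ℝ n) :=
    { carrier := C, add_mem' := fun ha hb => hadd ha hb,
      zero_mem' := ⟨fun _ => 0, fun _ => le_refl 0, by simp⟩,
      smul_mem' := by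
        rintro c w ⟨α, hα, rfl⟩
        exact ⟨fun x => (c : ℝ) * α x, fun x => mul_nonneg c.2 (hα x),
          by rw [Finset.smul_sum]; apply Finset.sum_congr rfl; intro x _
             change (c : ℝ) • α x • g x = ((c : ℝ) * α x) • g x; rw [smul_smul]⟩,
      isClosed' := cone_isClosed g s } with hK
  have hne : (K : Set (EuclideanSpace ℝ n)).Nonempty :=
    ⟨0, ⟨fun _ => 0, fun _ => le_refl 0, by simp⟩⟩
  have hcl : IsClosed (K : Set (EuclideanSpace ℝ n)) := cone_isClosed g s
  obtain ⟨y, hy1, hy2⟩ :=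
    K.hyperplane_separation' (x₀ := b) hb
  refine ⟨y, fun x hx => ?_, by rwa [real_inner_comm]⟩
  apply hy1
  refine ⟨fun z => if z = x then 1 else 0, fun z => by positivity, ?_⟩
  have : ∀ z ∈ s, (fun z => if z = x then (1:ℝ) else 0) z • g z
      = if z = x then g x else 0 := by
    intro z _; by_cases h : z = x <;> simp [h]
  rw [Finset.sum_congr rfl this, Finset.sum_ite_eq' s x (fun _ => g x), if_pos hx]

noncomputable def toE {d : ℕ} : Matrix (Fin d) (Fin d) ℝ →ₗ[ℝ] EuclideanSpace ℝ (Fin d × Fin d) where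
  toFun M := (WithLp.equiv 2 ((Fin d × Fin d) → ℝ)).symm (fun p => M p.1 p.2)
  map_add' := by intros; rfl
  map_smul' := by intros; rfl

lemma toE_inj {d : ℕ} : Function.Injective (toE (d := d)) := by
  intro A B h
  ext i j
  have := congrFun (congrArg (WithLp.equiv 2 ((Fin d × Fin d) → ℝ)) h) (i, j)
  simpa [toE] using this

open scoped InnerProductSpace in
lemma inner_toE_left {d : ℕ} (M : Matrix (Fin d) (Fin d) ℝ)
    (y : EuclideanSpace ℝ (Fin d × Fin d)) :
    ⟪toE M, y⟫_ℝ = ∑ i, ∑ j, M i j * y (i, j) := by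
  rw [PiLp.inner_apply, Fintype.sum_prod_type]
  apply Finset.sum_congr rfl; intro i _
  apply Finset.sum_congr rfl; intro j _
  simp [toE, RCLike.inner_apply, conj_trivial, WithLp.equiv_symm_apply, mul_comm]

open scoped InnerProductSpace in
lemma inner_toE_right {d : ℕ} (M : Matrix (Fin d) (Fin d) ℝ)
    (y : EuclideanSpace ℝ (Fin d × Fin d)) :
    ⟪y, toE M⟫_ℝ = ∑ i, ∑ j, M i j * y (i, j) := by
  rw [real_inner_comm]; exact inner_toE_left M y

open scoped InnerProductSpace in
lemma inner_toE_vecMulVec {d : ℕ} (v : Fin d → ℝ) (y : EuclideanSpace ℝ (Fin d × Fin d)) :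
    ⟪toE (vecMulVec v v), y⟫_ℝ = qf (Matrix.of fun i j => y (i, j)) v := by
  rw [inner_toE_left, qf_sum_sum]
  apply Finset.sum_congr rfl; intro i _
  apply Finset.sum_congr rfl; intro j _
  simp [vecMulVec_apply]; ring

lemma trace_mul_symm_eq {d : ℕ} (W : Matrix (Fin d) (Fin d) ℝ) (hW : Wᵀ = W)
    (y : EuclideanSpace ℝ (Fin d × Fin d)) :
    Matrix.trace (W * ((2:ℝ)⁻¹ • ((Matrix.of fun i j => y (i, j)) +
        (Matrix.of fun i j => y (i, j))ᵀ))) = ∑ i, ∑ j, W i j * y (i, j) := by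
  have hWs : ∀ i j, W j i = W i j := fun i j => congrFun (congrFun hW i) j
  rw [Matrix.trace]
  simp only [Matrix.diag_apply, Matrix.mul_apply, Matrix.smul_apply, Matrix.add_apply,
    Matrix.transpose_apply, Matrix.of_apply, smul_eq_mul]
  rw [Finset.sum_comm]
  have swap : ∑ j, ∑ i, W i j * ((2:ℝ)⁻¹ * (y (j, i) + y (i, j)))
      = ∑ j, ∑ i, ((2:ℝ)⁻¹ * (W i j * y (j, i)) + (2:ℝ)⁻¹ * (W i j * y (i, j))) := by
    apply Finset.sum_congr rfl; intro j _; apply Finset.sum_congr rfl; intro i _; ring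
  rw [swap]
  simp only [Finset.sum_add_distrib, ← Finset.mul_sum]
  have h1 : ∑ j, ∑ i, W i j * y (j, i) = ∑ i, ∑ j, W i j * y (i, j) := by
    apply Finset.sum_congr rfl; intro a _; apply Finset.sum_congr rfl; intro b _
    rw [hWs]
  rw [h1]
  have h2 : ∑ j, ∑ i, W i j * y (i, j) = ∑ i, ∑ j, W i j * y (i, j) :=
    Finset.sum_comm
  rw [h2]; ring

lemma intCast_ne_zero {d : ℕ} {x : Fin d → ℤ} (hx : x ≠ 0) : intCast x ≠ 0 := by
  intro h
  apply hx
  funext i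
  have := congrFun h i
  simpa [intCast] using this

lemma small_finite {d : ℕ} (hd : 0 < d) {Q : Matrix (Fin d) (Fin d) ℝ} (hQ : Q.PosDef) :
    {x : Fin d → ℤ | x ≠ 0 ∧ qf Q (intCast x) ≤ 2}.Finite := by
  obtain ⟨c, hc, hlow⟩ := qf_lower hd hQ
  set R := Real.sqrt (2 / c) with hR
  set M := ⌈R⌉ with hM
  apply Set.Finite.subset (Finset.finite_toSet (Finset.Icc (fun _ : Fin d => -M) (fun _ => M)))
  rintro x ⟨hx0, hx2⟩
  have hn : ‖intCast x‖ ≤ R := by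
    have h1 : c * ‖intCast x‖ ^ 2 ≤ 2 := le_trans (hlow (intCast x)) hx2
    have h2 : ‖intCast x‖ ^ 2 ≤ 2 / c := by
      rw [le_div_iff₀ hc]; linarith
    have := Real.sqrt_le_sqrt h2
    rwa [Real.sqrt_sq (norm_nonneg _)] at this
  have hcoord : ∀ i, |(x i : ℝ)| ≤ (M : ℝ) := by
    intro i
    have h1 : |(x i : ℝ)| ≤ ‖intCast x‖ := by
      simpa [intCast, Real.norm_eq_abs] using norm_le_pi_norm (intCast x) i
    have h2 : R ≤ (M : ℝ) := Int.le_ceil R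
    linarith
  simp only [Finset.coe_Icc, Set.mem_Icc, Pi.le_def]
  constructor
  · intro i
    have := hcoord i
    have h1 : -(M:ℝ) ≤ (x i : ℝ) := by cases abs_le.1 this; linarith
    exact_mod_cast h1
  · intro i
    have := hcoord i
    have h1 : (x i : ℝ) ≤ (M:ℝ) := (abs_le.1 this).2
    exact_mod_cast h1


set_option maxHeartbeats 1000000 in
/-- If Q⁻¹ is not in the Voronoi domain, then Q is not a local minimum of det on the
Ryshkov polyhedron (the other direction of Voronoi's characterization). -/
theorem stmt11 (d : ℕ) (hd : 0 < d) (Q : Matrix (Fin d) (Fin d) ℝ) (hQ : Q.PosDef)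
    (hlam : arithMin Q = 1) (hfin : (minVecs Q).Finite)
    (hnotV : ¬ ∃ α : (Fin d → ℤ) → ℝ, (∀ x, 0 ≤ α x) ∧
      Q⁻¹ = ∑ x ∈ hfin.toFinset, α x • vecMulVec (intCast x) (intCast x)) :
    ∀ U ∈ nhds Q, ∃ Q' ∈ U, Matrix.PosDef Q' ∧ 1 ≤ arithMin Q' ∧
      Matrix.det Q' < Q.det := by
  classical
  intro U hU
  have hdetQ : 0 < Q.det := hQ.det_pos
  have hQsymm : Qᵀ = Q := by
    rw [← Matrix.conjTranspose_eq_transpose_of_trivial]; exact hQ.1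
  have hQinv_symm : Q⁻¹ᵀ = Q⁻¹ := by
    rw [Matrix.transpose_nonsing_inv, hQsymm]
  -- positivity of qf Q on nonzero vectors
  have hqfpos : ∀ v : Fin d → ℝ, v ≠ 0 → 0 < qf Q v := by
    intro v hv
    have := hQ.dotProduct_mulVec_pos hv
    simpa [qf, star_trivial] using this
  -- every nonzero integer vector has qf ≥ 1
  have harithlb : ∀ x : Fin d → ℤ, x ≠ 0 → 1 ≤ qf Q (intCast x) := by
    intro x hx
    rw [← hlam, arithMin]
    apply csInf_le
    · refine ⟨0, ?_⟩
      rintro r ⟨z, hz, rfl⟩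
      exact (hqfpos _ (intCast_ne_zero hz)).le
    · exact ⟨x, hx, rfl⟩
  -- separation
  set s := hfin.toFinset with hs
  set g : (Fin d → ℤ) → EuclideanSpace ℝ (Fin d × Fin d) :=
    fun x => toE (vecMulVec (intCast x) (intCast x)) with hg
  have hbnot : ¬ ∃ α : (Fin d → ℤ) → ℝ, (∀ x, 0 ≤ α x) ∧ toE Q⁻¹ = ∑ x ∈ s, α x • g x := by
    rintro ⟨α, hα, heq⟩
    apply hnotV
    refine ⟨α, hα, toE_inj ?_⟩
    rw [heq, map_sum]
    apply Finset.sum_congr rfl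
    intro x _
    rw [_root_.map_smul]
  obtain ⟨y, hy1, hy2⟩ := cone_separation g s (toE Q⁻¹) hbnot
  set Y : Matrix (Fin d) (Fin d) ℝ := Matrix.of fun i j => y (i, j) with hY
  set N : Matrix (Fin d) (Fin d) ℝ := (2:ℝ)⁻¹ • (Y + Yᵀ) with hN
  have hNsymm : Nᵀ = N := by
    rw [hN, Matrix.transpose_smul, Matrix.transpose_add, Matrix.transpose_transpose, add_comm]
  have hNHerm : N.IsHermitian := by
    rw [Matrix.IsHermitian, Matrix.conjTranspose_eq_transpose_of_trivial, hNsymm]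
  have hqfN : ∀ v, qf N v = qf Y v := by
    intro v
    rw [hN, qf_smul, qf_add, qf_transpose]
    ring
  -- nonnegativity on minimal vectors
  have hNmin : ∀ x ∈ s, 0 ≤ qf N (intCast x) := by
    intro x hx
    rw [hqfN]
    have := hy1 x hx
    rwa [hg, inner_toE_vecMulVec, ← hY] at this
  -- negative trace
  have htr : Matrix.trace (Q⁻¹ * N) < 0 := by
    have h1 := trace_mul_symm_eq Q⁻¹ hQinv_symm y
    rw [← hY, ← hN] at h1
    rw [h1, ← inner_toE_right]
    exact hy2
  -- lower bound for Q
  obtain ⟨c0, hc0, hlow⟩ := qf_lower hd hQ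
  obtain ⟨C0, hC0, hup⟩ := qf_upper N
  -- gap for non-minimal vectors
  obtain ⟨μ, hμ1, hμall⟩ : ∃ μ : ℝ, 1 < μ ∧
      ∀ x : Fin d → ℤ, x ≠ 0 → x ∉ minVecs Q → μ ≤ qf Q (intCast x) := by
    have hGfin := small_finite hd hQ
    set S1 := hGfin.toFinset.filter (fun x => x ∉ minVecs Q) with hS1
    have hqgt1 : ∀ x ∈ S1, 1 < qf Q (intCast x) := by
      intro x hx
      rw [hS1, Finset.mem_filter] at hx
      obtain ⟨hxG, hxnm⟩ := hx
      rw [Set.Finite.mem_toFinset] at hxG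
      rcases lt_or_eq_of_le (harithlb x hxG.1) with h | h
      · exact h
      · exact absurd ⟨hxG.1, by rw [← h, hlam]⟩ hxnm
    rcases Finset.eq_empty_or_nonempty S1 with hemp | hne
    · refine ⟨2, one_lt_two, fun x hx hxm => ?_⟩
      by_contra hlt
      push_neg at hlt
      have : x ∈ S1 := by
        rw [hS1, Finset.mem_filter, Set.Finite.mem_toFinset]
        exact ⟨⟨hx, hlt.le⟩, hxm⟩
      rw [hemp] at this
      exact absurd this (Finset.notMem_empty x)
    · set μ := S1.inf' hne (fun x => qf Q (intCast x)) with hμ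
      obtain ⟨x1, hx1, hx1eq⟩ := Finset.exists_mem_eq_inf' hne (fun x => qf Q (intCast x))
      have hx1G : qf Q (intCast x1) ≤ 2 := by
        have := (Finset.mem_filter.1 hx1).1
        rw [Set.Finite.mem_toFinset] at this
        exact this.2
      refine ⟨μ, by rw [hμ, hx1eq]; exact hqgt1 x1 hx1, fun x hx hxm => ?_⟩
      rcases le_or_gt (qf Q (intCast x)) 2 with h | h
      · apply Finset.inf'_le
        rw [hS1, Finset.mem_filter, Set.Finite.mem_toFinset]
        exact ⟨⟨hx, h⟩, hxm⟩
      · have : μ ≤ 2 := by rw [hμ, hx1eq]; exact hx1G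
        linarith
  -- the perturbation polynomial
  set p := (Matrix.det (1 + (Polynomial.X : Polynomial ℝ) •
      (Q⁻¹ * N).map Polynomial.C)).divX.divX with hp
  set tr := Matrix.trace (Q⁻¹ * N) with htrdef
  -- eventual statements
  set l := nhdsWithin (0:ℝ) (Set.Ioi 0) with hl
  have hcontQ : Continuous (fun t : ℝ => Q + t • N) :=
    continuous_const.add (continuous_id.smul continuous_const)
  have ev1 : ∀ᶠ t in l, Q + t • N ∈ U := by
    have htend : Filter.Tendsto (fun t : ℝ => Q + t • N) l (nhds Q) := by
      have h0 : Filter.Tendsto (fun t : ℝ => Q + t • N) (nhds 0) (nhds Q) := by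
        have := hcontQ.tendsto 0
        simpa using this
      exact h0.mono_left nhdsWithin_le_nhds
    exact htend hU
  have ev2 : ∀ᶠ t in l, tr + p.eval t * t < 0 := by
    have hcont : Continuous (fun t : ℝ => tr + p.eval t * t) :=
      continuous_const.add (p.continuous.mul continuous_id)
    have htend : Filter.Tendsto (fun t : ℝ => tr + p.eval t * t) (nhds 0) (nhds tr) := by
      have := hcont.tendsto 0
      simpa using this
    exact (htend.eventually (gt_mem_nhds htr)).filter_mono nhdsWithin_le_nhds
  have hthr : (0:ℝ) < min (c0 / C0) ((1 - 1/μ) * (c0 / C0)) := by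
    have h1 : (0:ℝ) < c0 / C0 := div_pos hc0 hC0
    have h2 : (0:ℝ) < 1 - 1/μ := by
      have : 1/μ < 1 := by rw [div_lt_one (by linarith)]; exact hμ1
      linarith
    exact lt_min h1 (mul_pos h2 h1)
  have ev3 : ∀ᶠ t in l, t < min (c0 / C0) ((1 - 1/μ) * (c0 / C0)) :=
    (gt_mem_nhds hthr).filter_mono nhdsWithin_le_nhds
  have ev4 : ∀ᶠ t in l, 0 < t := eventually_mem_nhdsWithin
  obtain ⟨t, htU, htdet, htsmall, htpos⟩ := (ev1.and (ev2.and (ev3.and ev4))).exists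
  have ht1 : t < c0 / C0 := lt_of_lt_of_le htsmall (min_le_left _ _)
  have ht2 : t < (1 - 1/μ) * (c0 / C0) := lt_of_lt_of_le htsmall (min_le_right _ _)
  refine ⟨Q + t • N, htU, ?_, ?_, ?_⟩
  -- PosDef
  · have htNh : (t • N).IsHermitian := by
      rw [Matrix.IsHermitian, Matrix.conjTranspose_eq_transpose_of_trivial,
        Matrix.transpose_smul, hNsymm]
    refine Matrix.PosDef.of_dotProduct_mulVec_pos (hQ.1.add htNh) fun v hv => ?_
    have habs := hup v
    have hlo := hlow v
    have hvpos : 0 < ‖v‖ ^ 2 := pow_pos (norm_pos_iff.2 hv) 2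
    have hq : star v ⬝ᵥ (Q + t • N) *ᵥ v = qf Q v + t * qf N v := by
      rw [star_trivial, ← qf, qf_add, qf_smul]
    rw [hq]
    have h3 : t * C0 < c0 := (lt_div_iff₀ hC0).1 ht1
    nlinarith [mul_le_mul_of_nonneg_left (neg_le_of_abs_le habs) htpos.le,
      mul_lt_mul_of_pos_right h3 hvpos]
  -- arithMin ≥ 1
  · have hbound : ∀ x : Fin d → ℤ, x ≠ 0 → 1 ≤ qf (Q + t • N) (intCast x) := by
      intro x hx
      rw [qf_add, qf_smul]
      by_cases hxm : x ∈ minVecs Q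
      · have h1 : qf Q (intCast x) = 1 := by rw [hxm.2, hlam]
        have h2 : 0 ≤ qf N (intCast x) := hNmin x (by rw [hs, Set.Finite.mem_toFinset]; exact hxm)
        nlinarith
      · have hq : μ ≤ qf Q (intCast x) := hμall x hx hxm
        have habs := hup (intCast x)
        have hlo := hlow (intCast x)
        have hC0nv : c0 * ‖intCast x‖ ^ 2 ≤ qf Q (intCast x) := hlo
        have hμpos : 0 < μ := by linarith
        have hs1 : 0 ≤ 1 - 1/μ := by
          have : 1/μ < 1 := by rw [div_lt_one hμpos]; exact hμ1
          linarith
        have ht2' : t * C0 ≤ (1 - 1/μ) * c0 := by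
          have h := mul_le_mul_of_nonneg_right ht2.le (le_of_lt hC0)
          have heq : (1 - 1/μ) * (c0 / C0) * C0 = (1 - 1/μ) * c0 := by field_simp
          linarith [heq ▸ h]
        have hnv : 0 ≤ ‖intCast x‖ ^ 2 := by positivity
        set q := qf Q (intCast x) with hqdef
        set w := qf N (intCast x) with hwdef
        set nv := ‖intCast x‖ ^ 2 with hnvdef
        have e1 : -(t * (C0 * nv)) ≤ t * w := by
          have h1 : -(C0 * nv) ≤ w := neg_le_of_abs_le habs
          nlinarith
        have e2 : t * (C0 * nv) ≤ ((1 - 1/μ) * c0) * nv := by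
          have := mul_le_mul_of_nonneg_right ht2' hnv
          nlinarith
        have e3 : (1 - 1/μ) * (c0 * nv) ≤ (1 - 1/μ) * q :=
          mul_le_mul_of_nonneg_left hC0nv hs1
        have e4 : (1:ℝ) ≤ (1/μ) * q := by
          have h1 : (1/μ) * μ ≤ (1/μ) * q :=
            mul_le_mul_of_nonneg_left hq (by positivity)
          have h2 : (1/μ) * μ = 1 := by field_simp
          linarith
        nlinarith
    rw [arithMin]
    apply le_csInf
    · refine ⟨qf (Q + t • N) (intCast (fun _ => 1)), fun _ => 1, ?_, rfl⟩
      intro h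
      have := congrFun h ⟨0, hd⟩
      simp at this
    · rintro r ⟨z, hz, rfl⟩
      exact hbound z hz
  -- determinant decreases
  · have hdetunit : IsUnit Q.det := isUnit_iff_ne_zero.2 (ne_of_gt hdetQ)
    have hfact : Q + t • N = Q * (1 + t • (Q⁻¹ * N)) := by
      rw [mul_add, mul_one, Matrix.mul_smul, ← Matrix.mul_assoc,
        Matrix.mul_nonsing_inv _ hdetunit, Matrix.one_mul]
    have hdet' : (Q + t • N).det = Q.det * (1 + tr * t + p.eval t * t ^ 2) := by
      rw [hfact, Matrix.det_mul, Matrix.det_one_add_smul, htrdef, hp]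
    rw [hdet']
    have hX : 1 + tr * t + p.eval t * t ^ 2 < 1 := by
      nlinarith [mul_neg_of_pos_of_neg htpos htdet]
    have := mul_lt_mul_of_pos_left hX hdetQ
    simpa using this
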